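/- Let p, q be positive integers and α : (ZMod p) × (ZMod q) → ℝ a probability distribution with α(0,0) = 0, α ≥ 0, Σ α = 1, and suppose the support {(i,j) : α(i,j) > 0} generates the group (ZMod p) × (ZMod q). Let L_*(x) = Σ_{(i,j)} α(-i,-j) (J_p^i ⊗ J_q^j) x (J_p^i ⊗ J_q^j)* − x on the complex matrices indexed by (ZMod p) × (ZMod q). Then a matrix ρ satisfies L_*(ρ) = 0 if and only if ρ lies in the linear span of {J_p^i ⊗ J_q^j : (i,j) ∈ (ZMod p) × (ZMod q)}; moreover, if in addition tr(ρ) = 1, then the coefficient of the identity I = J_p^0 ⊗ J_q^0 in this expansion equals 1/(pq). In particular every invariant state of the circulant semigroup has the form ρ = (1/(pq)) I + Σ_{(i,j) ≠ (0,0)} ρ_{ij} J_p^i ⊗ J_q^j. -/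

import Mathlib

open Matrix Kronecker

noncomputable section

/-- The primary permutation (left-shift) matrix `J_p`. -/
def Jmat (p : ℕ) : Matrix (ZMod p) (ZMod p) ℂ :=
  Matrix.of fun i j => if j = i + 1 then 1 else 0

/-- The Kraus operator `J_p^i ⊗ J_q^j`. -/
def Kr (p q : ℕ) [NeZero p] [NeZero q] (i : ZMod p) (j : ZMod q) :
    Matrix (ZMod p × ZMod q) (ZMod p × ZMod q) ℂ :=
  (Jmat p ^ i.val) ⊗ₖ (Jmat q ^ j.val)

/-- The predual circulant GKSL generator `L_*` associated with `α`. -/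
def LStar (p q : ℕ) [NeZero p] [NeZero q] (α : ZMod p × ZMod q → ℝ)
    (x : Matrix (ZMod p × ZMod q) (ZMod p × ZMod q) ℂ) :
    Matrix (ZMod p × ZMod q) (ZMod p × ZMod q) ℂ :=
  (∑ ij : ZMod p × ZMod q,
    (α (-ij.1, -ij.2) : ℂ) • (Kr p q ij.1 ij.2 * x * (Kr p q ij.1 ij.2)ᴴ)) - x


lemma mem_addSubmonoid_closure_of_closure_top {G : Type*} [AddCommGroup G] [Fintype G]
    {S : Set G} (hgen : AddSubgroup.closure S = ⊤) (x : G) :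
    x ∈ AddSubmonoid.closure S := by
  have hneg : ∀ y ∈ AddSubmonoid.closure S, -y ∈ AddSubmonoid.closure S := by
    intro y hy
    have hpos : 0 < addOrderOf y := addOrderOf_pos y
    have h1 : (addOrderOf y - 1) • y + y = 0 := by
      rw [← succ_nsmul, Nat.sub_add_cancel hpos, addOrderOf_nsmul_eq_zero]
    rw [← eq_neg_of_add_eq_zero_left h1]
    exact AddSubmonoid.nsmul_mem _ hy _
  let H : AddSubgroup G :=
    { AddSubmonoid.closure S with neg_mem' := fun hy => hneg _ hy }
  have hle : AddSubgroup.closure S ≤ H :=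
    (AddSubgroup.closure_le H).mpr AddSubmonoid.subset_closure
  exact hle (hgen ▸ AddSubgroup.mem_top x)

lemma harmonic_constant {G : Type*} [AddCommGroup G] [Fintype G] [DecidableEq G]
    (α : G → ℝ) (hα : ∀ g, 0 ≤ α g) (hsum : ∑ g, α g = 1)
    (hgen : AddSubgroup.closure {g | 0 < α g} = ⊤)
    (h : G → ℝ) (hh : ∀ v, ∑ g, α g * h (v - g) = h v) (v w : G) : h v = h w := by
  obtain ⟨v0, -, hv0⟩ := Finset.exists_max_image Finset.univ h ⟨0, Finset.mem_univ 0⟩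
  have step : ∀ g, 0 < α g → ∀ u, h u = h v0 → h (u - g) = h v0 := by
    intro g hg u hu
    have hzero : ∑ g', α g' * (h v0 - h (u - g')) = 0 := by
      simp only [mul_sub]
      rw [Finset.sum_sub_distrib, ← Finset.sum_mul, hsum, one_mul, hh u, hu, sub_self]
    have hterm := (Finset.sum_eq_zero_iff_of_nonneg (fun g' _ =>
      mul_nonneg (hα g') (sub_nonneg.mpr (hv0 _ (Finset.mem_univ _))))).mp hzero
      g (Finset.mem_univ g)
    rcases mul_eq_zero.mp hterm with h1 | h2
    · exact absurd h1 (ne_of_gt hg)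
    · linarith [sub_eq_zero.mp h2]
  have key : ∀ g ∈ AddSubmonoid.closure {g | 0 < α g},
      ∀ u, h u = h v0 → h (u - g) = h v0 := by
    intro g hg
    induction hg using AddSubmonoid.closure_induction with
    | mem g hgm => exact step g hgm
    | zero => intro u hu; simpa using hu
    | add g1 g2 _ _ ih1 ih2 =>
      intro u hu
      rw [show u - (g1 + g2) = u - g1 - g2 by abel]
      exact ih2 _ (ih1 _ hu)
  have hall : ∀ x, h x = h v0 := fun x => by
    have := key (v0 - x) (mem_addSubmonoid_closure_of_closure_top hgen _) v0 rfl
    simpa using this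
  rw [hall v, hall w]

lemma harmonic_constant_complex {G : Type*} [AddCommGroup G] [Fintype G] [DecidableEq G]
    (α : G → ℝ) (hα : ∀ g, 0 ≤ α g) (hsum : ∑ g, α g = 1)
    (hgen : AddSubgroup.closure {g | 0 < α g} = ⊤)
    (f : G → ℂ) (hf : ∀ v, ∑ g, (α g : ℂ) * f (v - g) = f v) (v w : G) : f v = f w := by
  apply Complex.ext
  · exact harmonic_constant α hα hsum hgen (fun u => (f u).re) (fun u => by
      show ∑ g : G, α g * (f (u - g)).re = (f u).re
      rw [← hf u, Complex.re_sum]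
      exact Finset.sum_congr rfl fun g _ => (Complex.re_ofReal_mul _ _).symm) v w
  · exact harmonic_constant α hα hsum hgen (fun u => (f u).im) (fun u => by
      show ∑ g : G, α g * (f (u - g)).im = (f u).im
      rw [← hf u, Complex.im_sum]
      exact Finset.sum_congr rfl fun g _ => (Complex.im_ofReal_mul _ _).symm) v w

lemma Jpow_apply (p : ℕ) [NeZero p] (k : ℕ) (a b : ZMod p) :
    (Jmat p ^ k) a b = if b = a + (k : ZMod p) then 1 else 0 := by
  induction k generalizing a b with
  | zero => simp [Matrix.one_apply, eq_comm]
  | succ k ih =>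
    rw [pow_succ, Matrix.mul_apply]
    simp only [ih]
    simp only [Jmat, Matrix.of_apply, ite_mul, one_mul, zero_mul]
    rw [Finset.sum_ite_eq' Finset.univ (a + (k : ZMod p))]
    simp [add_assoc]

lemma Kr_apply (p q : ℕ) [NeZero p] [NeZero q] (g u v : ZMod p × ZMod q) :
    Kr p q g.1 g.2 u v = if v = u + g then 1 else 0 := by
  obtain ⟨i, j⟩ := g; obtain ⟨a, b⟩ := u; obtain ⟨c, d⟩ := v
  show (Jmat p ^ i.val) a c * (Jmat q ^ j.val) b d = _
  rw [Jpow_apply, Jpow_apply, ZMod.natCast_rightInverse i, ZMod.natCast_rightInverse j]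
  by_cases h1 : c = a + i <;> by_cases h2 : d = b + j <;>
    simp [h1, h2, Prod.ext_iff]

lemma KxK (p q : ℕ) [NeZero p] [NeZero q] (g : ZMod p × ZMod q)
    (x : Matrix (ZMod p × ZMod q) (ZMod p × ZMod q) ℂ) (u v : ZMod p × ZMod q) :
    (Kr p q g.1 g.2 * x * (Kr p q g.1 g.2)ᴴ) u v = x (u + g) (v + g) := by
  simp [Matrix.mul_apply, Matrix.conjTranspose_apply, Kr_apply, apply_ite (star : ℂ → ℂ),
    ite_mul, mul_ite, Finset.sum_ite_eq', Finset.sum_ite_eq]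

lemma LStar_apply (p q : ℕ) [NeZero p] [NeZero q] (α : ZMod p × ZMod q → ℝ)
    (x : Matrix (ZMod p × ZMod q) (ZMod p × ZMod q) ℂ) (u v : ZMod p × ZMod q) :
    LStar p q α x u v =
      (∑ g : ZMod p × ZMod q, (α (-g) : ℂ) * x (u + g) (v + g)) - x u v := by
  simp only [LStar, Matrix.sub_apply, Matrix.sum_apply, Matrix.smul_apply, KxK, smul_eq_mul]
  rfl

theorem stmt17 (p q : ℕ) [NeZero p] [NeZero q]
    (α : ZMod p × ZMod q → ℝ) (hα : ∀ ij, 0 ≤ α ij)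
    (hsum : ∑ ij : ZMod p × ZMod q, α ij = 1) (h0 : α (0, 0) = 0)
    (hgen : AddSubgroup.closure {ij : ZMod p × ZMod q | 0 < α ij} = ⊤) :
    ∀ ρ : Matrix (ZMod p × ZMod q) (ZMod p × ZMod q) ℂ,
      (LStar p q α ρ = 0 ↔
        ρ ∈ Submodule.span ℂ
          (Set.range fun ij : ZMod p × ZMod q => Kr p q ij.1 ij.2)) ∧
      (LStar p q α ρ = 0 → Matrix.trace ρ = 1 →
        ∃ c : ZMod p × ZMod q → ℂ,
          ρ = ∑ ij : ZMod p × ZMod q, c ij • Kr p q ij.1 ij.2 ∧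
          c (0, 0) = 1 / ((p : ℂ) * q)) := by
  intro ρ
  have hsumneg : ∑ g : ZMod p × ZMod q, (α (-g) : ℂ) = 1 := by
    have h1 : ∑ g : ZMod p × ZMod q, α (-g) = 1 := by
      rw [Fintype.sum_equiv (Equiv.neg (ZMod p × ZMod q)) (fun g => α (-g)) α (fun x => by simp)]
      exact hsum
    exact_mod_cast h1
  have hconstant : LStar p q α ρ = 0 → ∀ u v, ρ u v = ρ (u - v) 0 := by
    intro hL
    have heq : ∀ u v : ZMod p × ZMod q,
        ∑ g : ZMod p × ZMod q, (α (-g) : ℂ) * ρ (u + g) (v + g) = ρ u v := by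
      intro u v
      have h : LStar p q α ρ u v = (0 : Matrix (ZMod p × ZMod q) (ZMod p × ZMod q) ℂ) u v := by
        rw [hL]
      rw [LStar_apply, Matrix.zero_apply] at h
      exact sub_eq_zero.mp h
    intro u v
    have key : ρ (v + (u - v)) v = ρ (0 + (u - v)) 0 := by
      refine harmonic_constant_complex α hα hsum hgen
        (fun w => ρ (w + (u - v)) w) (fun z => ?_) v 0
      show ∑ g : ZMod p × ZMod q, (α g : ℂ) * ρ (z - g + (u - v)) (z - g) = ρ (z + (u - v)) z
      rw [Fintype.sum_equiv (Equiv.neg (ZMod p × ZMod q))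
        (fun g => (α g : ℂ) * ρ (z - g + (u - v)) (z - g))
        (fun g => (α (-g) : ℂ) * ρ (z + g + (u - v)) (z + g))
        (fun x => by simp [sub_eq_add_neg])]
      rw [Finset.sum_congr rfl fun g _ => by
        rw [show z + g + (u - v) = z + (u - v) + g by abel]]
      exact heq (z + (u - v)) z
    rwa [show v + (u - v) = u by abel, zero_add] at key
  have hrepr : (∀ u v, ρ u v = ρ (u - v) 0) →
      ρ = ∑ g : ZMod p × ZMod q, ρ (-g) 0 • Kr p q g.1 g.2 := by
    intro hc
    refine Matrix.ext fun u v => ?_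
    have hs : (∑ g : ZMod p × ZMod q, ρ (-g) 0 • Kr p q g.1 g.2) u v = ρ (-(v - u)) 0 := by
      rw [Matrix.sum_apply]
      rw [Finset.sum_eq_single (v - u)]
      · rw [Matrix.smul_apply, Kr_apply, if_pos (show v = u + (v - u) by abel), smul_eq_mul,
          mul_one]
      · intro g _ hg
        have hne : ¬ (v = u + g) := fun hvu => hg (by rw [hvu]; abel)
        rw [Matrix.smul_apply, Kr_apply, if_neg hne, smul_zero]
      · exact fun hmem => absurd (Finset.mem_univ _) hmem
    rw [hs, neg_sub]
    exact hc u v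
  have hKr0 : ∀ h : ZMod p × ZMod q, LStar p q α (Kr p q h.1 h.2) = 0 := by
    intro h
    refine Matrix.ext fun u v => ?_
    rw [LStar_apply, Matrix.zero_apply, sub_eq_zero]
    have hterm : ∀ g : ZMod p × ZMod q,
        (α (-g) : ℂ) * Kr p q h.1 h.2 (u + g) (v + g)
          = (α (-g) : ℂ) * Kr p q h.1 h.2 u v := by
      intro g
      rw [Kr_apply p q h (u + g) (v + g), Kr_apply p q h u v]
      by_cases hc : v = u + h
      · rw [if_pos hc, if_pos (by rw [hc]; abel)]
      · rw [if_neg hc, if_neg (fun hcc => hc (add_right_cancel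
          (show v + g = (u + h) + g by rw [hcc]; abel)))]
    rw [Finset.sum_congr rfl fun g _ => hterm g, ← Finset.sum_mul, hsumneg, one_mul]
  constructor
  · constructor
    · intro hL
      rw [hrepr (hconstant hL)]
      exact Submodule.sum_mem _ fun g _ =>
        Submodule.smul_mem _ _ (Submodule.subset_span ⟨g, rfl⟩)
    · intro hmem
      clear hconstant hrepr
      induction hmem using Submodule.span_induction with
      | mem x hx => obtain ⟨g, rfl⟩ := hx; exact hKr0 g
      | zero =>
        refine Matrix.ext fun u v => ?_
        rw [LStar_apply]; simp
      | add x y _ _ ihx ihy =>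
        have hadd : LStar p q α (x + y) = LStar p q α x + LStar p q α y := by
          refine Matrix.ext fun u v => ?_
          simp only [LStar_apply, Matrix.add_apply, mul_add]
          rw [Finset.sum_add_distrib]; ring
        rw [hadd, ihx, ihy, add_zero]
      | smul c x _ ihx =>
        have hsm : LStar p q α (c • x) = c • LStar p q α x := by
          refine Matrix.ext fun u v => ?_
          simp only [LStar_apply, Matrix.smul_apply, smul_eq_mul, mul_sub]
          rw [Finset.mul_sum]
          congr 1
          exact Finset.sum_congr rfl fun g _ => by ring
        rw [hsm, ihx, smul_zero]
  · intro hL htr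
    have hc := hconstant hL
    refine ⟨fun g => ρ (-g) 0, hrepr hc, ?_⟩
    show ρ (-((0 : ZMod p), (0 : ZMod q))) 0 = 1 / ((p : ℂ) * q)
    have h00 : (-(((0 : ZMod p), (0 : ZMod q))) : ZMod p × ZMod q) = 0 := by simp
    rw [h00]
    have hcard : Matrix.trace ρ = ((p : ℂ) * q) * ρ 0 0 := by
      rw [Matrix.trace]
      rw [Finset.sum_congr rfl (fun u _ => show ρ.diag u = ρ 0 0 by
        rw [Matrix.diag_apply, hc u u, sub_self])]
      rw [Finset.sum_const, Finset.card_univ, nsmul_eq_mul]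
      congr 1
      simp [ZMod.card]
    rw [htr] at hcard
    have hne : ((p : ℂ) * q) ≠ 0 :=
      mul_ne_zero (Nat.cast_ne_zero.mpr (NeZero.ne p)) (Nat.cast_ne_zero.mpr (NeZero.ne q))
    rw [eq_div_iff hne, mul_comm]
    exact hcard.symm
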